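/- Assume μ > −1 and μλ + μ + λ ≥ 0, and assume either μλ − μ − λ < 0, or (μλ − μ − λ = 0 and μ > 1). Then H_{μλ} has no even eigenvalue in (−∞, 0), and it has exactly one even eigenvalue outside [0,2], which lies in (2, +∞). -/

import Mathlib

open MeasureTheory Real Filter Topology

/-- The potential `v(0) = μ`, `v(±1) = λ/2`, `v(x) = 0` for `|x| > 1`. -/
noncomputable def pot (μ lam : ℝ) (x : ℤ) : ℝ :=
  if x = 0 then μ else if x = 1 ∨ x = -1 then lam / 2 else 0

/-- A real number `z` is an *even eigenvalue* of the discrete Schrödinger operator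
`H_{μλ}` on `ℓ²(ℤ; ℂ)`, `(H_{μλ}ψ)(x) = ψ(x) − (ψ(x+1) + ψ(x−1))/2 + v(x)ψ(x)`,
if there is a nonzero even `ψ ∈ ℓ²(ℤ; ℂ)` with `H_{μλ}ψ = zψ`. -/
def IsEvenEigenvalue (μ lam z : ℝ) : Prop :=
  ∃ ψ : lp (fun _ : ℤ => ℂ) 2, ψ ≠ 0 ∧ (∀ x : ℤ, ψ (-x) = ψ x) ∧
    ∀ x : ℤ, ψ x - (ψ (x + 1) + ψ (x - 1)) / 2 + (pot μ lam x : ℂ) * ψ x = (z : ℂ) * ψ x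


-- G(r) > 0 for r in (0,1): rules out eigenvalues below 0
lemma G_pos (μ lam r : ℝ) (h1 : -1 < μ) (h2 : 0 ≤ μ * lam + μ + lam)
    (hr0 : 0 < r) (hr1 : r < 1) : 2 * r ^ 2 < (1 + lam * r) * (r ^ 2 + 2 * μ * r + 1) := by
  have hM : 0 < 1 + μ := by linarith
  have hL : 0 < 1 + lam := by nlinarith
  have hu : 0 < 1 - r := by linarith
  nlinarith [mul_pos (mul_pos hu hu) hu, mul_pos (mul_pos hM hr0) hu,
    mul_pos (mul_pos hL hr0) (mul_pos hu hu),
    mul_nonneg h2 (mul_pos hr0 hr0).le]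


set_option maxHeartbeats 1000000 in
lemma G_unique (μ lam r1 r2 : ℝ) (hw : μ * lam - μ - lam ≤ 0)
    (h11 : -1 < r1) (h12 : r1 < 0) (h21 : -1 < r2) (h22 : r2 < 0)
    (e1 : (1 + lam * r1) * (r1 ^ 2 + 2 * μ * r1 + 1) = 2 * r1 ^ 2)
    (e2 : (1 + lam * r2) * (r2 ^ 2 + 2 * μ * r2 + 1) = 2 * r2 ^ 2) : r1 = r2 := by
  by_contra hne
  have hsub : r1 - r2 ≠ 0 := sub_ne_zero.2 hne
  have hA : lam * (r1 ^ 2 + r1 * r2 + r2 ^ 2) + (2 * μ * lam - 1) * (r1 + r2) + (2 * μ + lam) = 0 := by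
    have h : (r1 - r2) * (lam * (r1 ^ 2 + r1 * r2 + r2 ^ 2) + (2 * μ * lam - 1) * (r1 + r2) + (2 * μ + lam)) = 0 := by
      linear_combination e1 - e2
    exact (mul_eq_zero.1 h).resolve_left hsub
  have hlam : lam ≠ 0 := by
    rintro rfl
    have h2μ : (r1 - r2) * (r1 + r2 - 2 * μ) = 0 := by linear_combination e2 - e1
    have h2μ' : r1 + r2 = 2 * μ := by
      have := (mul_eq_zero.1 h2μ).resolve_left hsub; linarith
    nlinarith [mul_pos (neg_pos.2 h12) (neg_pos.2 h22)]
  have hp : 0 < r1 * r2 := mul_pos_of_neg_of_neg h12 h22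
  have hlp : lam * (r1 * r2) ≠ 0 := mul_ne_zero hlam hp.ne'
  set r3 : ℝ := -1 / (lam * (r1 * r2)) with hr3def
  have hV3 : lam * (r1 * r2 * r3) = -1 := by
    rw [hr3def]; field_simp; rw [div_self hp.ne']
  clear_value r3
  clear hr3def
  have hC : lam * (r1 * r2) * (r1 + r2) + (2 * μ * lam - 1) * (r1 * r2) = 1 := by
    linear_combination ((r1 + r2) / 2) * hA - (1 / 2) * e1 - (1 / 2) * e2
  have hV1 : lam * (r1 + r2 + r3) = 1 - 2 * μ * lam := by
    have key : (r1 * r2) * (lam * (r1 + r2 + r3)) = (r1 * r2) * (1 - 2 * μ * lam) := by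
      linear_combination hC + hV3
    exact mul_left_cancel₀ hp.ne' key
  have hV2 : lam * (r1 * r2 + r1 * r3 + r2 * r3) = 2 * μ + lam := by
    have key : (r1 * r2) * (lam * (r1 * r2 + r1 * r3 + r2 * r3)) = (r1 * r2) * (2 * μ + lam) := by
      linear_combination (r1 + r2) * hV3 + (r1 + r2) * hC - (r1 * r2) * hA
    exact mul_left_cancel₀ hp.ne' key
  have hD : lam ^ 2 * ((1 - r1 * r2) * (1 - r2 * r3) * (1 - r3 * r1) + 2 * (r1 * r2 * r3) ^ 2) = 0 := by
    linear_combination (lam * (r1 * r2 * r3)) * hV1 + (-lam) * hV2 +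
      (lam * (r1 * r2 * r3) - 2 * μ * lam) * hV3
  have hGm1 : 2 * (μ * lam - μ - lam) = -(lam * ((1 + r1) * ((1 + r2) * (1 + r3)))) := by
    linear_combination hV1 + hV2 + hV3
  have hp1 : 0 < 1 - r1 * r2 := by nlinarith
  have hl2 : 0 < lam ^ 2 := by positivity
  have hfin : ∀ a b : ℝ, a < 1 → b < 1 →
      ¬ (lam ^ 2 * ((1 - r1 * r2) * (1 - a) * (1 - b) + 2 * (r1 * r2 * r3) ^ 2) = 0) := by
    intro a b ha hb hzero
    have hP : 0 < (1 - r1 * r2) * (1 - a) * (1 - b) :=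
      mul_pos (mul_pos hp1 (by linarith)) (by linarith)
    nlinarith [mul_pos hl2 hP, mul_nonneg hl2.le (sq_nonneg (r1 * r2 * r3))]
  rcases lt_or_gt_of_ne hlam with hneg | hpos
  · -- lam < 0 : r3 > 0, cross products negative
    have hr3pos : 0 < r3 := by
      rcases le_or_gt r3 0 with h | h
      · exfalso
        have h0 : r1 * r2 * r3 ≤ 0 := mul_nonpos_of_nonneg_of_nonpos hp.le h
        have : 0 ≤ lam * (r1 * r2 * r3) := by
          nlinarith [mul_nonneg (neg_nonneg.2 hneg.le) (neg_nonneg.2 h0)]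
        linarith [hV3]
      · exact h
    exact hfin (r2 * r3) (r3 * r1)
      (by nlinarith [mul_pos hr3pos (neg_pos.2 h22)])
      (by nlinarith [mul_pos hr3pos (neg_pos.2 h12)]) hD
  · -- lam > 0 : r3 ∈ [-1, 0)
    have hr3neg : r3 < 0 := by
      rcases lt_or_ge r3 0 with h | h
      · exact h
      · exfalso
        have : 0 ≤ lam * (r1 * r2 * r3) := by positivity
        linarith [hV3]
    have hq : 0 ≤ lam * ((1 + r1) * ((1 + r2) * (1 + r3))) := by linarith [hGm1, hw]
    have hr3ge : -1 ≤ r3 := by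
      by_contra hc
      push_neg at hc
      have h12' : 0 < (1 + r1) * (1 + r2) := mul_pos (by linarith) (by linarith)
      have hlt : lam * ((1 + r1) * (1 + r2)) * (1 + r3) < 0 :=
        mul_neg_of_pos_of_neg (mul_pos hpos h12') (by linarith)
      have heq2 : lam * ((1 + r1) * (1 + r2)) * (1 + r3)
          = lam * ((1 + r1) * ((1 + r2) * (1 + r3))) := by ring
      rw [heq2] at hlt
      linarith
    have h23 : r2 * r3 < 1 := by
      have := mul_lt_mul_of_pos_right (show -r2 < 1 by linarith) (show 0 < -r3 by linarith)
      nlinarith [this]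
    have h31 : r3 * r1 < 1 := by
      have := mul_lt_mul_of_pos_right (show -r1 < 1 by linarith) (show 0 < -r3 by linarith)
      nlinarith [this]
    exact hfin (r2 * r3) (r3 * r1) h23 h31 hD


lemma G_exists (μ lam : ℝ)
    (h3 : μ * lam - μ - lam < 0 ∨ (μ * lam - μ - lam = 0 ∧ 1 < μ)) :
    ∃ r : ℝ, -1 < r ∧ r < 0 ∧ (1 + lam * r) * (r ^ 2 + 2 * μ * r + 1) = 2 * r ^ 2 := by
  rcases h3 with h3 | ⟨h3, hμ⟩
  · set f : ℝ → ℝ := fun r => (1 + lam * r) * (r ^ 2 + 2 * μ * r + 1) - 2 * r ^ 2 with hf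
    have hcont : ContinuousOn f (Set.Icc (-1) 0) := (by fun_prop : Continuous f).continuousOn
    have hiv := intermediate_value_Ioo (by norm_num : (-1:ℝ) ≤ 0) hcont
    have h0 : (0:ℝ) ∈ Set.Ioo (f (-1)) (f 0) := by
      constructor
      · show f (-1) < 0
        simp only [hf]; nlinarith
      · show (0:ℝ) < f 0
        simp only [hf]; norm_num
    obtain ⟨r, hr, hfr⟩ := hiv h0
    exact ⟨r, hr.1, hr.2, by linarith [hfr, (by ring : f r = (1 + lam * r) * (r ^ 2 + 2 * μ * r + 1) - 2 * r ^ 2)]⟩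
  · set q : ℝ → ℝ := fun r => lam * r ^ 2 + (2 * μ + lam - 1) * r + 1 with hq
    have hcont : ContinuousOn q (Set.Icc (-1) 0) := (by fun_prop : Continuous q).continuousOn
    have hiv := intermediate_value_Ioo (by norm_num : (-1:ℝ) ≤ 0) hcont
    have h0 : (0:ℝ) ∈ Set.Ioo (q (-1)) (q 0) := by
      constructor
      · show q (-1) < 0
        simp only [hq]; nlinarith
      · show (0:ℝ) < q 0
        simp only [hq]; norm_num
    obtain ⟨r, hr, hqr⟩ := hiv h0
    refine ⟨r, hr.1, hr.2, ?_⟩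
    have hqr' : lam * r ^ 2 + (2 * μ + lam - 1) * r + 1 = 0 := by
      have : q r = lam * r ^ 2 + (2 * μ + lam - 1) * r + 1 := rfl
      linarith [hqr]
    linear_combination (r + 1) * hqr' + (2 * r ^ 2) * h3

lemma pot_far (μ lam : ℝ) (x : ℤ) (hx : 2 ≤ x) : pot μ lam x = 0 := by
  unfold pot
  rw [if_neg (by omega), if_neg (by omega)]

lemma pot_zero (μ lam : ℝ) : pot μ lam 0 = μ := by simp [pot]

lemma pot_one (μ lam : ℝ) : pot μ lam 1 = lam / 2 := by norm_num [pot]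

-- decay of lp functions along ℕ
lemma lp_tendsto_zero (ψ : lp (fun _ : ℤ => ℂ) 2) :
    Tendsto (fun n : ℕ => ψ (n : ℤ)) atTop (nhds 0) := by
  have hsum : Summable fun x : ℤ => ‖ψ x‖ ^ ((2 : ENNReal).toReal) :=
    (lp.memℓp ψ).summable (by norm_num)
  have hsum2 : Summable fun x : ℤ => ‖ψ x‖ ^ (2 : ℕ) := by
    refine hsum.congr fun x => ?_
    rw [show ((2 : ENNReal).toReal) = ((2 : ℕ) : ℝ) by norm_num, Real.rpow_natCast]
  have hsumN : Summable fun n : ℕ => ‖ψ (n : ℤ)‖ ^ (2 : ℕ) :=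
    hsum2.comp_injective fun a b h => by exact_mod_cast h
  have htend : Tendsto (fun n : ℕ => ‖ψ (n : ℤ)‖ ^ (2:ℕ)) atTop (nhds 0) :=
    hsumN.tendsto_atTop_zero
  have htn : Tendsto (fun n : ℕ => ‖ψ (n : ℤ)‖) atTop (nhds 0) := by
    have := (Real.continuous_sqrt.tendsto 0).comp htend
    simp only [Function.comp_def, Real.sqrt_zero] at this
    refine this.congr fun n => ?_
    rw [show (‖ψ (n:ℤ)‖ ^ (2:ℕ)) = (‖ψ (n:ℤ)‖)^2 by norm_num, Real.sqrt_sq (norm_nonneg _)]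
  rw [tendsto_zero_iff_norm_tendsto_zero]
  exact htn

lemma root_of_isEigen (μ lam z r : ℝ) (hrne : r ≠ 0) (hr1 : |r| < 1)
    (hquad : r ^ 2 - 2 * (1 - z) * r + 1 = 0)
    (h : IsEvenEigenvalue μ lam z) :
    (1 + lam * r) * (r ^ 2 + 2 * μ * r + 1) = 2 * r ^ 2 := by
  obtain ⟨ψ, hne, hev, heq⟩ := h
  have hrC : (r : ℂ) ≠ 0 := by exact_mod_cast hrne
  have hquadC : (r : ℂ) ^ 2 - 2 * (1 - (z:ℂ)) * (r:ℂ) + 1 = 0 := by exact_mod_cast hquad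
  -- recurrence for x ≥ 2
  have hrec : ∀ n : ℕ, ψ ((n : ℤ) + 3) = 2 * (1 - (z:ℂ)) * ψ ((n : ℤ) + 2) - ψ ((n : ℤ) + 1) := by
    intro n
    have h2 := heq ((n : ℤ) + 2)
    rw [pot_far μ lam _ (by omega)] at h2
    have e1 : ((n : ℤ) + 2) + 1 = (n : ℤ) + 3 := by ring
    have e2 : ((n : ℤ) + 2) - 1 = (n : ℤ) + 1 := by ring
    rw [e1, e2] at h2
    push_cast at h2 ⊢
    linear_combination (-2 : ℂ) * h2
  set c : ℕ → ℂ := fun n => ψ ((n : ℤ) + 2) - r * ψ ((n : ℤ) + 1) with hc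
  have hstep : ∀ n, c n = (r : ℂ) * c (n + 1) := by
    intro n
    simp only [hc]
    push_cast
    have e1 : ((n : ℤ) + 1) + 2 = (n : ℤ) + 3 := by ring
    have e2 : ((n : ℤ) + 1) + 1 = (n : ℤ) + 2 := by ring
    rw [e1, e2, hrec n]
    linear_combination ψ ((n:ℤ) + 2) * hquadC
  have hgeo2 : ∀ n, c 0 = (r : ℂ) ^ n * c n := by
    intro n
    induction n with
    | zero => simp
    | succ k ih => rw [ih, hstep k]; ring
  have hc0 : c 0 = 0 := by
    have htc : Tendsto (fun n : ℕ => c n) atTop (nhds 0) := by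
      have h2 : Tendsto (fun n : ℕ => ψ ((n : ℤ) + 2)) atTop (nhds 0) := by
        have := (lp_tendsto_zero ψ).comp (tendsto_add_atTop_nat 2)
        refine this.congr fun n => ?_
        simp only [Function.comp_apply]
        push_cast
        ring_nf
      have h1 : Tendsto (fun n : ℕ => ψ ((n : ℤ) + 1)) atTop (nhds 0) := by
        have := (lp_tendsto_zero ψ).comp (tendsto_add_atTop_nat 1)
        refine this.congr fun n => ?_
        simp only [Function.comp_apply]
        push_cast
        ring_nf
      have := h2.sub (h1.const_mul (r : ℂ))
      simpa using this
    have hle : ∀ n : ℕ, ‖c 0‖ ≤ ‖c n‖ := by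
      intro n
      rw [hgeo2 n, norm_mul, norm_pow]
      apply mul_le_of_le_one_left (norm_nonneg _)
      apply pow_le_one₀ (norm_nonneg _)
      rw [Complex.norm_real, Real.norm_eq_abs]
      exact hr1.le
    have h01 := htc.norm
    simp only [norm_zero] at h01
    have : ‖c 0‖ ≤ 0 := ge_of_tendsto' h01 hle
    exact norm_le_zero_iff.1 this
  have hzero : ∀ n, c n = 0 := by
    intro n
    have h := hgeo2 n
    rw [hc0] at h
    have := h.symm
    rcases mul_eq_zero.1 this with h' | h'
    · exact absurd h' (pow_ne_zero _ hrC)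
    · exact h'
  have hgr : ∀ n : ℕ, ψ ((n : ℤ) + 2) = (r:ℂ) * ψ ((n : ℤ) + 1) := by
    intro n
    have := hzero n
    simp only [hc] at this
    linear_combination this
  -- boundary equations
  have hψ2 : ψ (2 : ℤ) = (r:ℂ) * ψ (1 : ℤ) := by
    have := hgr 0
    norm_num at this
    exact this
  have e0 := heq 0
  rw [pot_zero, show (0:ℤ) + 1 = 1 by ring, show (0:ℤ) - 1 = -1 by ring,
    show ψ (-1 : ℤ) = ψ (1 : ℤ) from hev 1] at e0
  have e1 := heq 1
  rw [pot_one, show (1:ℤ) + 1 = 2 by ring, show (1:ℤ) - 1 = 0 by ring, hψ2] at e1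
  push_cast at e1
  have hψ0ne : ψ (0 : ℤ) ≠ 0 := by
    intro h0
    have hψ1 : ψ (1 : ℤ) = 0 := by
      rw [h0] at e0
      linear_combination -e0
    have hall : ∀ n : ℕ, ψ ((n : ℤ)) = 0 ∧ ψ ((n : ℤ) + 1) = 0 := by
      intro n
      induction n with
      | zero => exact ⟨h0, by norm_num; exact hψ1⟩
      | succ k ih =>
        constructor
        · push_cast
          exact ih.2
        · push_cast
          have := hgr k
          rw [show ((k:ℤ) + 1) + 1 = (k:ℤ) + 2 by ring, this, ih.2, mul_zero]
    apply hne
    apply lp.ext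
    funext x
    have hx0 : ∀ y : ℤ, 0 ≤ y → ψ y = 0 := by
      intro y hy
      lift y to ℕ using hy
      exact (hall y).1
    rcases le_or_gt 0 x with hx | hx
    · simpa using hx0 x hx
    · have hxx : ψ x = ψ (-x) := by
        have := hev (-x)
        rw [neg_neg] at this
        exact this
      rw [hxx]
      simpa using hx0 (-x) (by omega)
  have key : ((1 + (lam:ℂ) * r) * (1 + μ - z) - r) * ψ (0:ℤ) = 0 := by
    linear_combination ((r:ℂ) * (2 + lam - 2*z - r)) * e0 + (2*(r:ℂ)) * e1 +
      ((1:ℂ) + μ - z) * ψ (0:ℤ) * hquadC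
  have hkey2 : (1 + (lam:ℂ) * r) * (1 + μ - z) - r = 0 :=
    (mul_eq_zero.1 key).resolve_right hψ0ne
  have hkeyR : (1 + lam * r) * (1 + μ - z) - r = 0 := by exact_mod_cast hkey2
  linear_combination (2*r) * hkeyR + (1 + lam * r) * hquad

lemma pot_even (μ lam : ℝ) (x : ℤ) : pot μ lam (-x) = pot μ lam x := by
  unfold pot
  split_ifs <;> first | rfl | omega

lemma isEigen_of_root (μ lam r : ℝ) (hm1 : -1 < r) (h0 : r < 0)
    (hroot : (1 + lam * r) * (r ^ 2 + 2 * μ * r + 1) = 2 * r ^ 2) :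
    IsEvenEigenvalue μ lam (1 - (r ^ 2 + 1) / (2 * r)) := by
  set z : ℝ := 1 - (r ^ 2 + 1) / (2 * r) with hzdef
  have hrne : r ≠ 0 := h0.ne
  have hrC : (r : ℂ) ≠ 0 := by exact_mod_cast hrne
  have hrootC : ((1:ℂ) + lam * r) * ((r:ℂ) ^ 2 + 2 * μ * r + 1) = 2 * (r:ℂ) ^ 2 := by
    exact_mod_cast hroot
  have hzC : (z : ℂ) = 1 - ((r:ℂ) ^ 2 + 1) / (2 * r) := by
    rw [hzdef]; push_cast; ring
  set f : ℤ → ℂ := fun x => if x = 0 then ((1 + lam * r : ℝ) : ℂ) else ((r:ℂ)) ^ x.natAbs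
    with hfdef
  have hfeven : ∀ x : ℤ, f (-x) = f x := by
    intro x
    simp only [hfdef, neg_eq_zero, Int.natAbs_neg]
  -- summability
  have hmem : Memℓp f 2 := by
    apply memℓp_gen
    have h2 : ((2 : ENNReal)).toReal = ((2:ℕ) : ℝ) := by norm_num
    rw [h2]
    simp only [Real.rpow_natCast]
    have hr2 : r ^ 2 < 1 := by nlinarith
    have hr2' : 0 ≤ r ^ 2 := sq_nonneg r
    set C : ℝ := max 1 ((1 + lam * r) ^ 2) with hC
    have hgeo : Summable fun n : ℕ => C * (r ^ 2) ^ n :=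
      (summable_geometric_of_lt_one hr2' hr2).mul_left C
    have hbound : ∀ y : ℤ, ‖f y‖ ^ 2 ≤ C * (r ^ 2) ^ y.natAbs := by
      intro y
      by_cases hy : y = 0
      · subst hy
        simp only [hfdef, if_pos rfl]
        rw [Complex.norm_real, Real.norm_eq_abs]
        simp only [Int.natAbs_zero, pow_zero, mul_one]
        rw [sq_abs]
        exact le_max_right _ _
      · simp only [hfdef, if_neg hy]
        rw [norm_pow, Complex.norm_real, Real.norm_eq_abs, ← pow_mul, mul_comm y.natAbs 2,
          pow_mul, sq_abs]
        exact le_mul_of_one_le_left (by positivity) (le_max_left _ _)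
    have hnat : Summable fun n : ℕ => ‖f (n : ℤ)‖ ^ 2 := by
      apply Summable.of_nonneg_of_le (fun n => by positivity) (fun n => ?_) hgeo
      have := hbound (n : ℤ)
      simpa using this
    have hneg : Summable fun n : ℕ => ‖f (-(n : ℤ))‖ ^ 2 := by
      refine hnat.congr fun n => ?_
      rw [hfeven]
    exact Summable.of_nat_of_neg hnat hneg
  have hfne : ∀ y : ℤ, y ≠ 0 → f y = (r:ℂ) ^ y.natAbs := fun y hy => by
    simp only [hfdef, if_neg hy]
  have hf0' : f 0 = ((1 + lam * r : ℝ) : ℂ) := by simp [hfdef]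
  have hpot0 : pot μ lam 0 = μ := by simp [pot]
  have hpot1 : pot μ lam 1 = lam / 2 := by norm_num [pot]
  refine ⟨⟨f, hmem⟩, ?_, ?_, ?_⟩
  · intro hzero
    have hfz : f 1 = 0 := by
      rw [show f = ((⟨f, hmem⟩ : lp (fun _ : ℤ => ℂ) 2) : ∀ _ : ℤ, ℂ) from rfl, hzero]
      simp
    rw [hfne 1 (by norm_num)] at hfz
    norm_num at hfz
    exact hrne hfz
  · intro x
    exact hfeven x
  · -- the eigenvalue equation
    have key : ∀ x : ℤ, 0 ≤ x →
        f x - (f (x + 1) + f (x - 1)) / 2 + (pot μ lam x : ℂ) * f x = (z : ℂ) * f x := by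
      intro x hx
      lift x to ℕ using hx
      match x with
      | 0 =>
        simp only [Nat.cast_zero]
        have hf1 : f (0 + 1) = (r : ℂ) := by
          rw [hfne _ (by norm_num)]; norm_num
        have hfm1 : f (0 - 1) = (r : ℂ) := by
          rw [hfne _ (by norm_num)]; norm_num
        rw [hf0', hf1, hfm1, hzC, hpot0]
        push_cast
        field_simp
        linear_combination hrootC
      | 1 =>
        simp only [Nat.cast_one]
        have hf1 : f 1 = (r : ℂ) := by
          rw [hfne _ (by norm_num)]; norm_num
        have hf2 : f (1 + 1) = (r : ℂ) ^ 2 := by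
          rw [hfne _ (by norm_num)]; norm_num
        have hf0'' : f (1 - 1) = ((1 + lam * r : ℝ) : ℂ) := by
          norm_num [hf0']
        rw [hf1, hf2, hf0'', hzC, hpot1]
        push_cast
        field_simp
        ring
      | (n + 2) =>
        have hab1 : ((n + 2 : ℕ) : ℤ).natAbs = n + 2 := by omega
        have hab2 : (((n + 2 : ℕ) : ℤ) + 1).natAbs = n + 3 := by omega
        have hab3 : (((n + 2 : ℕ) : ℤ) - 1).natAbs = n + 1 := by omega
        have hfx : f ((n + 2 : ℕ) : ℤ) = (r : ℂ) ^ (n + 2) := by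
          rw [hfne _ (by omega), hab1]
        have hfxp : f (((n + 2 : ℕ) : ℤ) + 1) = (r : ℂ) ^ (n + 3) := by
          rw [hfne _ (by omega), hab2]
        have hfxm : f (((n + 2 : ℕ) : ℤ) - 1) = (r : ℂ) ^ (n + 1) := by
          rw [hfne _ (by omega), hab3]
        have hpot : pot μ lam ((n + 2 : ℕ) : ℤ) = 0 := by
          unfold pot
          rw [if_neg (by omega), if_neg (by omega)]
        rw [hfx, hfxp, hfxm, hpot, hzC]
        push_cast
        field_simp
        ring
    intro x
    rcases le_or_gt 0 x with hx | hx
    · exact key x hx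
    · have h1 : -x + 1 = -(x - 1) := by ring
      have h2 : -x - 1 = -(x + 1) := by ring
      have hk := key (-x) (by omega)
      rw [h1, h2, hfeven (x - 1), hfeven (x + 1), hfeven x, pot_even] at hk
      rw [← hk]
      ring

/-- Region `G_{01}`: assume `μ > −1` and `μλ + μ + λ ≥ 0`, and either `μλ − μ − λ < 0`
or (`μλ − μ − λ = 0` and `μ > 1`). Then `H_{μλ}` has no even eigenvalue in `(−∞, 0)`,
and it has exactly one even eigenvalue outside `[0,2]`, which lies in `(2, +∞)`. -/
theorem region_G01 (μ lam : ℝ) (h1 : -1 < μ) (h2 : 0 ≤ μ * lam + μ + lam)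
    (h3 : μ * lam - μ - lam < 0 ∨ (μ * lam - μ - lam = 0 ∧ 1 < μ)) :
    (∀ z : ℝ, z < 0 → ¬ IsEvenEigenvalue μ lam z) ∧
    ∃ ζ : ℝ, 2 < ζ ∧ IsEvenEigenvalue μ lam ζ ∧
      ∀ z : ℝ, (z < 0 ∨ 2 < z) → IsEvenEigenvalue μ lam z → z = ζ := by
  have hw : μ * lam - μ - lam ≤ 0 := by
    rcases h3 with h | ⟨h, _⟩
    · exact h.le
    · exact h.le
  have part1 : ∀ z : ℝ, z < 0 → ¬ IsEvenEigenvalue μ lam z := by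
    intro z hz hei
    set s : ℝ := Real.sqrt ((1 - z) ^ 2 - 1) with hsdef
    have ht : 1 < 1 - z := by linarith
    have hs2 : s ^ 2 = (1 - z) ^ 2 - 1 := Real.sq_sqrt (by nlinarith)
    have hs0 : 0 ≤ s := Real.sqrt_nonneg _
    set r : ℝ := (1 - z) - s with hrdef
    have hrpos : 0 < r := by
      have : s < 1 - z := by nlinarith
      simp only [hrdef]; linarith
    have hrlt : r < 1 := by
      have : 1 - z - 1 < s := by nlinarith
      simp only [hrdef]; linarith
    have hquad : r ^ 2 - 2 * (1 - z) * r + 1 = 0 := by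
      simp only [hrdef]; linear_combination hs2
    have hG := root_of_isEigen μ lam z r hrpos.ne'
      (abs_lt.2 ⟨by linarith, hrlt⟩) hquad hei
    nlinarith [G_pos μ lam r h1 h2 hrpos hrlt]
  refine ⟨part1, ?_⟩
  obtain ⟨r0, hr0m, hr00, hroot0⟩ := G_exists μ lam h3
  have hr0ne : r0 ≠ 0 := hr00.ne
  set ζ : ℝ := 1 - (r0 ^ 2 + 1) / (2 * r0) with hζdef
  have hζ2 : 2 < ζ := by
    have h2r : 2 * r0 < 0 := by linarith
    have hq : (r0 ^ 2 + 1) / (2 * r0) < -1 := by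
      rw [div_lt_iff_of_neg h2r]
      nlinarith [sq_nonneg (r0 + 1), mul_pos (show (0:ℝ) < r0 + 1 by linarith) (show (0:ℝ) < r0 + 1 by linarith)]
    simp only [hζdef]; linarith
  refine ⟨ζ, hζ2, isEigen_of_root μ lam r0 hr0m hr00 hroot0, ?_⟩
  intro z hz hei
  rcases hz with hz | hz
  · exact absurd hei (part1 z hz)
  · set s : ℝ := Real.sqrt ((1 - z) ^ 2 - 1) with hsdef
    have ht : 1 - z < -1 := by linarith
    have hs2 : s ^ 2 = (1 - z) ^ 2 - 1 := Real.sq_sqrt (by nlinarith)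
    have hs0 : 0 ≤ s := Real.sqrt_nonneg _
    set r : ℝ := (1 - z) + s with hrdef
    have hrneg : r < 0 := by
      have : s < -(1 - z) := by nlinarith
      simp only [hrdef]; linarith
    have hrm1 : -1 < r := by
      have : -(1 + (1 - z)) < s := by nlinarith
      simp only [hrdef]; linarith
    have hquad : r ^ 2 - 2 * (1 - z) * r + 1 = 0 := by
      simp only [hrdef]; linear_combination hs2
    have hG := root_of_isEigen μ lam z r hrneg.ne
      (abs_lt.2 ⟨hrm1, by linarith⟩) hquad hei
    have heqr : r = r0 := G_unique μ lam r r0 hw hrm1 hrneg hr0m hr00 hG hroot0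
    rw [heqr] at hquad
    have : z * (2 * r0) = (1 - (r0 ^ 2 + 1) / (2 * r0)) * (2 * r0) := by
      field_simp
      linear_combination hquad
    have h2r0 : (2 * r0) ≠ 0 := by simpa using hr0ne
    simpa [hζdef] using mul_right_cancel₀ h2r0 this
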